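/- Let Λ be an additive commutative group, H = k[Λ] the group Hopf algebra, (M, Δ_M) a right H-comodule such that M = ⊕_{α ∈ Λ} M_α, and (B, θ_B) a left H-contramodule. Equip Hom_k(M,B) with the diagonal contra-action θ_diag(Φ)(m) = θ_B(h ↦ Φ(m₍₁₎h)(m₍₀₎)). Then for every ν ∈ Λ, the weight space Hom_k(M,B)_ν of the contramodule (Hom_k(M,B), θ_diag) equals {f ∈ Hom_k(M,B) : f(M_α) ⊆ B_{ν−α} for all α ∈ Λ}; that is, Hom_k(M,B)_ν = ∏_{α+β=ν} Hom_k(M_α, B_β). -/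

import Mathlib

/-!
STATEMENT 11: Let Λ be an additive commutative group and H = k[Λ] its group Hopf algebra
(formalized as a Hopf algebra with a basis (e_λ) of group-like elements satisfying
e_λ e_μ = e_{λ+μ}, S(e_λ) = e_{−λ}), M a right H-comodule which is the direct sum of its
weight spaces, and (B, θ_B) a left H-contramodule. Then for the diagonal contra-action on
Hom_k(M,B): Hom_k(M,B)_ν = {f : f(M_α) ⊆ B_{ν−α} for all α}, i.e.
Hom_k(M,B)_ν = ∏_{α+β=ν} Hom_k(M_α, B_β).
-/

open TensorProduct LinearMap

noncomputable section

variable (k : Type*) [Field k]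
variable (H : Type*) [Ring H] [HopfAlgebra k H]
variable (Λ : Type*) [AddCommGroup Λ] [DecidableEq Λ]

def IsComodule {M : Type*} [AddCommGroup M] [Module k M]
    (ρ : M →ₗ[k] M ⊗[k] H) : Prop :=
  ((TensorProduct.assoc k M H H).toLinearMap ∘ₗ (TensorProduct.map ρ LinearMap.id) ∘ₗ ρ
      = (TensorProduct.map LinearMap.id Coalgebra.comul) ∘ₗ ρ) ∧
  ((TensorProduct.rid k M).toLinearMap ∘ₗ
      (TensorProduct.map LinearMap.id Coalgebra.counit) ∘ₗ ρ = LinearMap.id)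

def IsContramodule {B : Type*} [AddCommGroup B] [Module k B]
    (θ : (H →ₗ[k] B) →ₗ[k] B) : Prop :=
  (∀ Φ : H →ₗ[k] (H →ₗ[k] B),
      θ (θ ∘ₗ Φ) = θ ((TensorProduct.lift Φ.flip) ∘ₗ Coalgebra.comul)) ∧
  (∀ b : B, θ ((LinearMap.toSpanSingleton k B b) ∘ₗ Coalgebra.counit) = b)

/-- The diagonal contra-action `θ_diag(Φ)(m) = θ_B(h ↦ Φ(m₍₁₎h)(m₍₀₎))` on `Hom_k(M,B)`. -/
def diagContra {M : Type*} [AddCommGroup M] [Module k M]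
    {B : Type*} [AddCommGroup B] [Module k B]
    (ρ : M →ₗ[k] M ⊗[k] H) (θB : (H →ₗ[k] B) →ₗ[k] B) :
    (H →ₗ[k] (M →ₗ[k] B)) →ₗ[k] (M →ₗ[k] B) :=
  (LinearMap.llcomp k M (H →ₗ[k] B) B θB) ∘ₗ
  (LinearMap.lcomp k (H →ₗ[k] B) ρ) ∘ₗ
  (TensorProduct.uncurry (RingHom.id k) M H (H →ₗ[k] B)) ∘ₗ
  (LinearMap.lflip (R₀ := k)).toLinearMap ∘ₗ
  (LinearMap.llcomp k H (H →ₗ[k] (M →ₗ[k] B)) (M →ₗ[k] (H →ₗ[k] B)) (LinearMap.lflip (R₀ := k)).toLinearMap) ∘ₗ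
  (TensorProduct.lcurry (RingHom.id k) H H (M →ₗ[k] B)) ∘ₗ
  (LinearMap.lcomp k (M →ₗ[k] B) (LinearMap.mul' k H))

/-- The weight space `M_α = {m : ρ(m) = m ⊗ e_α}` of a comodule. -/
def comodWeight {M : Type*} [AddCommGroup M] [Module k M]
    (ρ : M →ₗ[k] M ⊗[k] H) (e : Λ → H) (α : Λ) : Submodule k M :=
  LinearMap.ker (ρ - (TensorProduct.mk k M H).flip (e α))

/-- The weight space `B_β = {b : θ_B(φ) = φ(e_β) for all φ with range in k·b}`
of a contramodule. -/
def contraWeight {B : Type*} [AddCommGroup B] [Module k B]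
    (θB : (H →ₗ[k] B) →ₗ[k] B) (e : Λ → H) (β : Λ) : Set B :=
  {x | ∀ φ : H →ₗ[k] B, LinearMap.range φ ≤ Submodule.span k {x} → θB φ = φ (e β)}

/-- Key computation: if `ρ m = m ⊗ a`, then `diagContra Φ m = θB (h ↦ Φ (a * h) m)`. -/
lemma diag_apply {M : Type*} [AddCommGroup M] [Module k M]
    {B : Type*} [AddCommGroup B] [Module k B]
    (ρ : M →ₗ[k] M ⊗[k] H) (θB : (H →ₗ[k] B) →ₗ[k] B)
    (Φ : H →ₗ[k] (M →ₗ[k] B)) (m : M) (a : H) (hm : ρ m = m ⊗ₜ[k] a) :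
    diagContra k H ρ θB Φ m = θB ((Φ.flip m) ∘ₗ LinearMap.mulLeft k a) := by
  simp only [diagContra, LinearMap.comp_apply, llcomp_apply, lcomp_apply, hm]
  refine congrArg θB ?_
  ext h
  simp only [TensorProduct.uncurry_apply, lflip_apply, llcomp_apply, lcurry_apply,
    lcomp_apply, flip_apply, comp_apply, mulLeft_apply, mul'_apply, LinearEquiv.coe_coe]

lemma mem_comodWeight {M : Type*} [AddCommGroup M] [Module k M]
    (ρ : M →ₗ[k] M ⊗[k] H) (e : Λ → H) (α : Λ) (m : M) :
    m ∈ comodWeight k H Λ ρ e α ↔ ρ m = m ⊗ₜ[k] (e α) := by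
  simp [comodWeight, LinearMap.mem_ker, sub_eq_zero]

theorem diag_weight_spaces
    (M : Type*) [AddCommGroup M] [Module k M]
    (B : Type*) [AddCommGroup B] [Module k B]
    -- `H = k[Λ]`: a basis of group-like elements with `e_λ e_μ = e_{λ+μ}`, `S(e_λ) = e_{-λ}`
    (e : Module.Basis Λ k H)
    (hcomul : ∀ lam : Λ, Coalgebra.comul (R := k) (e lam) = (e lam) ⊗ₜ[k] (e lam))
    (hcounit : ∀ lam : Λ, Coalgebra.counit (R := k) (e lam) = (1 : k))
    (hmul : ∀ lam mu : Λ, (e lam) * (e mu) = e (lam + mu))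
    (hantipode : ∀ lam : Λ, HopfAlgebra.antipode (R := k) (e lam) = e (-lam))
    (ρ : M →ₗ[k] M ⊗[k] H) (hM : IsComodule k H ρ)
    -- `M` is the direct sum of its weight spaces
    (hMds : DirectSum.IsInternal (fun α : Λ => comodWeight k H Λ ρ (⇑e) α))
    (θB : (H →ₗ[k] B) →ₗ[k] B) (hB : IsContramodule k H θB)
    (ν : Λ) :
    contraWeight k H Λ (diagContra k H ρ θB) (⇑e) ν =
      {f : M →ₗ[k] B | ∀ α : Λ, ∀ m ∈ comodWeight k H Λ ρ (⇑e) α,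
        f m ∈ contraWeight k H Λ θB (⇑e) (ν - α)} := by
  -- `e 0` is a two-sided identity on basis vectors, hence `e 0 = 1`.
  have he0 : ∀ x : H, e 0 * x = x := by
    intro x
    have : LinearMap.mulLeft k (e 0) = LinearMap.id := by
      apply e.ext
      intro μ
      simp [LinearMap.mulLeft_apply, hmul 0 μ]
    simpa using LinearMap.congr_fun this x
  ext f
  constructor
  · -- f has diag weight ν → f maps M_α into B_{ν-α}
    intro hf α m hm φ hφ
    rw [mem_comodWeight] at hm
    by_cases hfm : f m = 0
    · have hφ0 : φ = 0 := by
        rw [hfm, Submodule.span_zero_singleton, le_bot_iff, LinearMap.range_eq_bot] at hφ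
        exact hφ
      simp [hφ0]
    · -- coefficient functional on span {f m}
      set c : H →ₗ[k] k :=
        (LinearEquiv.coord k B (f m) hfm).toLinearMap ∘ₗ
          (φ.codRestrict (Submodule.span k {f m}) (fun h => hφ ⟨h, rfl⟩)) with hc
      have hcs : ∀ h : H, c h • f m = φ h := by
        intro h
        exact LinearEquiv.coord_apply_smul k B (f m) hfm
          ⟨φ h, hφ ⟨h, rfl⟩⟩
      set Φ : H →ₗ[k] (M →ₗ[k] B) :=
        (LinearMap.toSpanSingleton k (M →ₗ[k] B) f) ∘ₗ c ∘ₗ (LinearMap.mulLeft k (e (-α)))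
        with hΦdef
      have hΦrange : LinearMap.range Φ ≤ Submodule.span k {f} := by
        rintro _ ⟨h, rfl⟩
        exact Submodule.smul_mem _ _ (Submodule.mem_span_singleton_self f)
      have key := hf Φ hΦrange
      have key' := LinearMap.congr_fun key m
      rw [diag_apply k H ρ θB Φ m (e α) hm] at key'
      have hinner : (Φ.flip m) ∘ₗ LinearMap.mulLeft k (e α) = φ := by
        ext h
        have : e (-α) * (e α * h) = h := by
          rw [← mul_assoc, hmul, neg_add_cancel, he0]
        simp [hΦdef, LinearMap.mulLeft_apply, this, hcs h]
      rw [hinner] at key'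
      have hΦν : Φ (e ν) m = φ (e (ν - α)) := by
        have : e (-α) * e ν = e (ν - α) := by
          rw [hmul]; congr 1; abel
        simp [hΦdef, LinearMap.mulLeft_apply, this, hcs]
      rw [key', hΦν]
  · -- f maps M_α into B_{ν-α} → f has diag weight ν
    intro hf Φ hΦ
    have hα : ∀ α : Λ, ∀ m ∈ comodWeight k H Λ ρ (⇑e) α,
        diagContra k H ρ θB Φ m = Φ (e ν) m := by
      intro α m hm
      rw [mem_comodWeight] at hm
      rw [diag_apply k H ρ θB Φ m (e α) hm]
      set φ : H →ₗ[k] B := (Φ.flip m) ∘ₗ LinearMap.mulLeft k (e α) with hφdef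
      have hφr : LinearMap.range φ ≤ Submodule.span k {f m} := by
        rintro _ ⟨h, rfl⟩
        obtain ⟨cc, hcc⟩ := Submodule.mem_span_singleton.mp (hΦ ⟨e α * h, rfl⟩)
        have : φ h = cc • f m := by
          simp [hφdef, LinearMap.mulLeft_apply, ← hcc]
        rw [this]
        exact Submodule.smul_mem _ _ (Submodule.mem_span_singleton_self _)
      have := hf α m ((mem_comodWeight k H Λ ρ (⇑e) α m).mpr hm) φ hφr
      rw [this]
      have : e α * e (ν - α) = e ν := by
        rw [hmul]; congr 1; abel
      simp [hφdef, LinearMap.mulLeft_apply, this]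
    -- conclude by the direct sum decomposition
    have hker : ∀ α : Λ, comodWeight k H Λ ρ (⇑e) α ≤
        LinearMap.ker (diagContra k H ρ θB Φ - Φ (e ν)) := by
      intro α m hm
      simp [LinearMap.mem_ker, sub_eq_zero, hα α m hm]
    have htop : (⊤ : Submodule k M) ≤
        LinearMap.ker (diagContra k H ρ θB Φ - Φ (e ν)) := by
      rw [← hMds.submodule_iSup_eq_top]
      exact iSup_le hker
    have : diagContra k H ρ θB Φ - Φ (e ν) = 0 :=
      LinearMap.ker_eq_top.mp (top_le_iff.mp htop)
    exact sub_eq_zero.mp this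

end
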